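/- Let Q_x, Q_y be d×d symmetric positive definite matrices with decomposition Q_y^{1/2} Q_x Q_y^{1/2} = U Λ Uᵀ (U orthogonal, Λ diagonal with positive entries). For λ > 0 define q_i = min(1/λ, Λ_ii) and Q = Q_y^{-1/2} U diag(q₁,…,q_d) Uᵀ Q_y^{-1/2}. Then Q satisfies tr(Q Q_y) = Σ_i q_i and 0 ⪯ Q ⪯ Q_x. -/

import Mathlib

open Matrix Finset

open scoped ComplexOrder in
/-- The square root of a positive semidefinite matrix, as defined in Mathlib (Dec 2024);
removed from current Mathlib, restored here verbatim. -/
noncomputable def Matrix.PosSemidef.sqrt {n 𝕜 : Type*} [Fintype n] [RCLike 𝕜] [DecidableEq n]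
    {A : Matrix n n 𝕜} (hA : A.PosSemidef) : Matrix n n 𝕜 :=
  hA.1.eigenvectorUnitary.1 * diagonal ((↑) ∘ Real.sqrt ∘ hA.1.eigenvalues) *
  (star hA.1.eigenvectorUnitary : Matrix n n 𝕜)

/-- the reverse water-filling matrix
`Q = Q_y^{-1/2} U diag(q) Uᵀ Q_y^{-1/2}` with `q_i = min (1/λ) Λ_ii`
satisfies `tr (Q Q_y) = ∑ q_i` and `0 ⪯ Q ⪯ Q_x`. -/
theorem stmt3 (d : ℕ) (Qx Qy : Matrix (Fin d) (Fin d) ℝ)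
    (hQx : Qx.PosDef) (hQy : Qy.PosDef)
    (U : Matrix (Fin d) (Fin d) ℝ) (hU : Uᵀ * U = 1)
    (Λ : Fin d → ℝ) (hΛpos : ∀ i, 0 < Λ i)
    (hdecomp : hQy.posSemidef.sqrt * Qx * hQy.posSemidef.sqrt
      = U * Matrix.diagonal Λ * Uᵀ)
    (lam : ℝ) (hlam : 0 < lam)
    (q : Fin d → ℝ) (hq : ∀ i, q i = min (1 / lam) (Λ i))
    (Q : Matrix (Fin d) (Fin d) ℝ)
    (hQ : Q = hQy.posSemidef.sqrt⁻¹ * U * Matrix.diagonal q * Uᵀ *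
      hQy.posSemidef.sqrt⁻¹) :
    (Q * Qy).trace = ∑ i, q i ∧ Q.PosSemidef ∧ (Qx - Q).PosSemidef := by
  set S := hQy.posSemidef.sqrt with hSdef
  have hSS : S * S = Qy := by
    have hA := hQy.posSemidef
    have hspec := hA.1.spectral_theorem
    rw [Unitary.conjStarAlgAut_apply] at hspec
    rw [hSdef, Matrix.PosSemidef.sqrt]
    set V := hA.1.eigenvectorUnitary
    have hVV : (star V : Matrix (Fin d) (Fin d) ℝ) * V.1 = 1 := Unitary.coe_star_mul_self V
    calc V.1 * diagonal ((↑) ∘ Real.sqrt ∘ hA.1.eigenvalues) * (star V : Matrix (Fin d) (Fin d) ℝ) *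
          (V.1 * diagonal ((↑) ∘ Real.sqrt ∘ hA.1.eigenvalues) * (star V : Matrix (Fin d) (Fin d) ℝ))
        = V.1 * (diagonal ((↑) ∘ Real.sqrt ∘ hA.1.eigenvalues) * ((star V : Matrix (Fin d) (Fin d) ℝ) * V.1) *
          diagonal ((↑) ∘ Real.sqrt ∘ hA.1.eigenvalues)) * (star V : Matrix (Fin d) (Fin d) ℝ) := by
          simp only [Matrix.mul_assoc]
      _ = Qy := by
        rw [hVV, Matrix.mul_one, diagonal_mul_diagonal]
        conv_rhs => rw [hspec]
        congr 3
        funext i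
        simp [Real.mul_self_sqrt (hA.eigenvalues_nonneg i)]
  have hSsym : Sᵀ = S := by
    rw [hSdef, Matrix.PosSemidef.sqrt]
    rw [transpose_mul, transpose_mul, diagonal_transpose, Matrix.mul_assoc]
    simp [star_eq_conjTranspose]
  have hdet : IsUnit S.det := by
    have h : S.det * S.det = Qy.det := by rw [← det_mul, hSS]
    have : Qy.det ≠ 0 := hQy.det_pos.ne'
    exact isUnit_iff_ne_zero.mpr (fun h0 => this (by rw [← h, h0, zero_mul]))
  have hinvS : S⁻¹ * S = 1 := nonsing_inv_mul S hdet
  have hSinv : S * S⁻¹ = 1 := mul_nonsing_inv S hdet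
  have hSinvSym : S⁻¹ᵀ = S⁻¹ := by rw [transpose_nonsing_inv, hSsym]
  have hUUT : U * Uᵀ = 1 := by
    have := mul_eq_one_comm.mp hU
    exact this
  have hct : (S⁻¹ * U)ᴴ = Uᵀ * S⁻¹ := by
    rw [conjTranspose_mul, conjTranspose_eq_transpose_of_trivial,
      conjTranspose_eq_transpose_of_trivial, hSinvSym]
  have hqnn : ∀ i, 0 ≤ q i := fun i => by
    rw [hq i]; exact le_min (by positivity) (hΛpos i).le
  refine ⟨?_, ?_, ?_⟩
  · rw [hQ, ← hSS]
    have : S⁻¹ * U * Matrix.diagonal q * Uᵀ * S⁻¹ * (S * S)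
        = S⁻¹ * U * Matrix.diagonal q * Uᵀ * S := by
      rw [Matrix.mul_assoc _ S⁻¹ (S*S), ← Matrix.mul_assoc S⁻¹ S S, hinvS, Matrix.one_mul]
    have h2 : S * (S⁻¹ * U * Matrix.diagonal q * Uᵀ) = U * Matrix.diagonal q * Uᵀ := by
      rw [← Matrix.mul_assoc, ← Matrix.mul_assoc, ← Matrix.mul_assoc, hSinv, Matrix.one_mul]
    rw [this, trace_mul_comm, h2, trace_mul_comm, ← Matrix.mul_assoc, hU,
      Matrix.one_mul, trace_diagonal]
  · have hDq : (Matrix.diagonal q).PosSemidef :=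
      posSemidef_diagonal_iff.mpr hqnn
    have := hDq.mul_mul_conjTranspose_same (S⁻¹ * U)
    rw [hct] at this
    rw [hQ]
    simpa [Matrix.mul_assoc] using this
  · have hQx' : Qx = S⁻¹ * U * Matrix.diagonal Λ * Uᵀ * S⁻¹ := by
      have h1 : S⁻¹ * (S * Qx * S) * S⁻¹ = Qx := by
        rw [← Matrix.mul_assoc, ← Matrix.mul_assoc, hinvS, Matrix.one_mul,
          Matrix.mul_assoc, hSinv, Matrix.mul_one]
      rw [← h1, hdecomp]
      noncomm_ring
    have hEq : Qx - Q = S⁻¹ * U * Matrix.diagonal (fun i => Λ i - q i) * Uᵀ * S⁻¹ := by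
      rw [hQx', hQ]
      have : Matrix.diagonal (fun i => Λ i - q i)
          = Matrix.diagonal Λ - Matrix.diagonal q := by
        rw [diagonal_sub]
      rw [this]
      noncomm_ring
    have hD : (Matrix.diagonal (fun i => Λ i - q i)).PosSemidef :=
      posSemidef_diagonal_iff.mpr fun i => by
        rw [hq i]; simp [min_le_right]
    have := hD.mul_mul_conjTranspose_same (S⁻¹ * U)
    rw [hct] at this
    rw [hEq]
    simpa [Matrix.mul_assoc] using this
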